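/- For a regular cardinal κ and a directed poset P: P fails to have calibre κ if and only if there is a Tukey quotient from P to κ. -/

import Mathlib

open Cardinal

def CofinalSet {α : Type*} [Preorder α] (C : Set α) : Prop := ∀ a : α, ∃ c ∈ C, a ≤ c

def TukeyQuotient {α β : Type*} [Preorder α] [Preorder β] (φ : α → β) : Prop :=
  ∀ C : Set α, CofinalSet C → CofinalSet (φ '' C)

def DirectedPoset (α : Type*) [Preorder α] : Prop := ∀ s : Finset α, ∃ b : α, ∀ x ∈ s, x ≤ b

/-- `P` has calibre `κ`: every `κ`-sized subset of `P` contains a `κ`-sized bounded subset. -/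
def HasCalibre (P : Type u) [Preorder P] (κ : Cardinal.{u}) : Prop :=
  ∀ S : Set P, #S = κ → ∃ T ⊆ S, #T = κ ∧ ∃ b : P, ∀ x ∈ T, x ≤ b

/-- for a regular cardinal `κ` and a directed poset `P`: `P` fails to have
calibre `κ` iff there is a Tukey quotient from `P` to `κ` (viewed as the ordinal poset
`κ.ord.toType`). -/
theorem stmt17 {P : Type u} [PartialOrder P] (hP : DirectedPoset P)
    (κ : Cardinal.{u}) (hκ : κ.IsRegular) :
    ¬ HasCalibre P κ ↔ ∃ φ : P → κ.ord.ToType, TukeyQuotient φ := by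
  haveI : NoMaxOrder κ.ord.ToType := Cardinal.noMaxOrder hκ.aleph0_le
  have hmkT : #(κ.ord.ToType) = κ := by rw [Cardinal.mk_toType, Cardinal.card_ord]
  -- bounded subsets of `κ.ord.ToType` are small
  have hbdd : ∀ b : κ.ord.ToType, #{i : κ.ord.ToType | i ≤ b} < κ := by
    intro b
    obtain ⟨c, hc⟩ := exists_gt b
    have h1 : {i : κ.ord.ToType | i ≤ b} ⊆ {i : κ.ord.ToType | i < c} :=
      fun i hi => lt_of_le_of_lt hi hc
    have h2 : #{i : κ.ord.ToType | i < c} < κ := by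
      have h3 := Cardinal.card_typein_toType_lt κ c
      have h4 : #{ y : κ.ord.ToType // y < c } =
          (@Ordinal.typein κ.ord.ToType (· < ·) isWellOrder_lt c).card :=
        @Ordinal.card_typein κ.ord.ToType (· < ·) isWellOrder_lt c
      exact lt_of_le_of_lt (le_of_eq h4) h3
    exact lt_of_le_of_lt (Cardinal.mk_le_mk_of_subset h1) h2
  -- κ-sized subsets of `κ.ord.ToType` are unbounded
  have hunbdd : ∀ A : Set κ.ord.ToType, #A = κ → ∀ b, ∃ a ∈ A, b ≤ a := by
    intro A hA b
    by_contra h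
    push_neg at h
    have hsub : A ⊆ {i : κ.ord.ToType | i ≤ b} := fun i hi => le_of_lt (h i hi)
    have := Cardinal.mk_le_mk_of_subset hsub
    rw [hA] at this
    exact absurd this (not_le.mpr (hbdd b))
  -- small subsets of `κ.ord.ToType` are strictly bounded
  have hsb : ∀ A : Set κ.ord.ToType, #A < κ → ∃ b, ∀ i ∈ A, i < b := by
    intro A hA
    haveI : IsWellOrder κ.ord.ToType (· < ·) := isWellOrder_lt
    by_contra hne
    push_neg at hne
    have hcof : IsCofinal A := fun a => by
      obtain ⟨c, hc⟩ := exists_gt a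
      obtain ⟨i, hi, hci⟩ := hne c
      exact ⟨i, hi, hc.le.trans hci⟩
    have := Order.cof_le hcof
    rw [Ordinal.cof_toType, hκ.cof_eq] at this
    exact absurd hA (not_lt.mpr this)
  constructor
  · -- no calibre → quotient
    intro h
    rw [HasCalibre] at h
    push_neg at h
    obtain ⟨S, hS, hT⟩ := h
    obtain ⟨e⟩ := Cardinal.eq.mp (hmkT.trans hS.symm)
    have key : ∀ p : P, ∃ b : κ.ord.ToType, ∀ i, ((e i : P) ≤ p) → i < b := by
      intro p
      apply hsb
      by_contra hge
      push_neg at hge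
      set A := {i : κ.ord.ToType | (e i : P) ≤ p} with hAdef
      have hAκ : #A = κ := by
        refine le_antisymm ?_ hge
        calc #A ≤ #(Set.univ : Set κ.ord.ToType) :=
              Cardinal.mk_le_mk_of_subset (Set.subset_univ A)
          _ = κ := by rw [Cardinal.mk_univ, hmkT]
      set T : Set P := (fun i => (e i : P)) '' A with hTdef
      have hinj : Function.Injective (fun i => (e i : P)) :=
        Subtype.val_injective.comp e.injective
      have hTS : T ⊆ S := by
        rintro x ⟨i, _, rfl⟩
        exact (e i).2
      have hTκ : #T = κ := by
        rw [hTdef, Cardinal.mk_image_eq hinj, hAκ]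
      obtain ⟨x, hxT, hxp⟩ := hT T hTS hTκ p
      obtain ⟨i, hiA, rfl⟩ := hxT
      exact hxp hiA
    choose φ hφ using key
    refine ⟨φ, ?_⟩
    intro C hC α
    obtain ⟨c, hcC, hc⟩ := hC (e α : P)
    exact ⟨φ c, ⟨c, hcC, rfl⟩, le_of_lt (hφ c α hc)⟩
  · -- quotient → no calibre
    rintro ⟨φ, hφ⟩ hcal
    have key : ∀ α : κ.ord.ToType, ∃ g : P, ∀ p, g ≤ p → α ≤ φ p := by
      intro α
      by_contra h
      push_neg at h
      have hC : CofinalSet {p : P | φ p < α} := by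
        intro a
        obtain ⟨p, hap, hp⟩ := h a
        exact ⟨p, hp, hap⟩
      obtain ⟨x, ⟨p, hp, rfl⟩, hx⟩ := hφ _ hC α
      exact hp.not_ge hx
    choose g hg using key
    set S := Set.range g with hSdef
    -- every fiber of `g` is small
    have hfib : ∀ s : P, #{α : κ.ord.ToType | g α = s} < κ := by
      intro s
      by_contra hbig
      push_neg at hbig
      have heq : #{α : κ.ord.ToType | g α = s} = κ := by
        refine le_antisymm ?_ hbig
        calc #{α : κ.ord.ToType | g α = s} ≤ #(Set.univ : Set κ.ord.ToType) :=
              Cardinal.mk_le_mk_of_subset (Set.subset_univ _)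
          _ = κ := by rw [Cardinal.mk_univ, hmkT]
      obtain ⟨c, hc⟩ := exists_gt (φ s)
      obtain ⟨a, ha, hca⟩ := hunbdd _ heq c
      have h1 : a ≤ φ s := hg a s (le_of_eq ha)
      exact absurd (lt_of_lt_of_le (lt_of_le_of_lt h1 hc) hca) (lt_irrefl a)
    have hSκ : #S = κ := by
      refine le_antisymm (by rw [← hmkT]; exact Cardinal.mk_range_le) ?_
      by_contra hlt
      push_neg at hlt
      have hcover : (Set.univ : Set κ.ord.ToType) ⊆
          ⋃ s : S, {α : κ.ord.ToType | g α = (s : P)} := by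
        intro α _
        exact Set.mem_iUnion.mpr ⟨⟨g α, Set.mem_range_self α⟩, rfl⟩
      have h1 : κ ≤ #(⋃ s : S, {α : κ.ord.ToType | g α = (s : P)}) := by
        calc κ = #(Set.univ : Set κ.ord.ToType) := by rw [Cardinal.mk_univ, hmkT]
          _ ≤ _ := Cardinal.mk_le_mk_of_subset hcover
      have h2 : #(⋃ s : S, {α : κ.ord.ToType | g α = (s : P)}) <
          κ := by
        refine lt_of_le_of_lt Cardinal.mk_iUnion_le_sum_mk ?_
        exact Cardinal.sum_lt_of_isRegular hκ hlt fun s => hfib s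
      exact absurd (lt_of_le_of_lt h1 h2) (lt_irrefl κ)
    obtain ⟨T, hTS, hTκ, b, hb⟩ := hcal S hSκ
    have hI : #(g ⁻¹' T) = κ := by
      refine le_antisymm ?_ ?_
      · calc #(g ⁻¹' T) ≤ #(Set.univ : Set κ.ord.ToType) :=
            Cardinal.mk_le_mk_of_subset (Set.subset_univ _)
          _ = κ := by rw [Cardinal.mk_univ, hmkT]
      · have hsurj : Function.Surjective
            (fun x : g ⁻¹' T => (⟨g x.1, x.2⟩ : T)) := by
          rintro ⟨t, ht⟩
          obtain ⟨α, rfl⟩ := hTS ht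
          exact ⟨⟨α, ht⟩, rfl⟩
        calc κ = #T := hTκ.symm
          _ ≤ #(g ⁻¹' T) := Cardinal.mk_le_of_surjective hsurj
    obtain ⟨c, hc⟩ := exists_gt (φ b)
    obtain ⟨a, haT, hca⟩ := hunbdd _ hI c
    have h1 : a ≤ φ b := hg a b (hb _ haT)
    exact absurd (lt_of_lt_of_le (lt_of_le_of_lt h1 hc) hca) (lt_irrefl a)
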